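/- For the distribution μ_pow2 that puts mass 1/L on each power of two 2^i for 0 ≤ i < L (L = ⌊log₂ n⌋) and mass 0 elsewhere, the token process started uniformly on {1,...,n} satisfies E(T) = O((log n)²). -/

import Mathlib

/-- The distribution putting mass `1/L` on each power of two `2^i`, `0 ≤ i < L = ⌊log₂ n⌋`. -/
noncomputable def muPow2 (n d : ℕ) : ℝ :=
  if d ∈ (Finset.range (Nat.log 2 n)).image (fun i => 2 ^ i) then
    ((Nat.log 2 n : ℝ))⁻¹ else 0

namespace Stmt6Aux

/-- The upper bound function used in the induction. -/
noncomputable def B (L a : ℕ) : ℝ :=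
  if a = 0 then 0 else
    (L : ℝ) * ((min (Nat.log 2 a + 1) L : ℕ) + (if 2 ^ L ≤ a then (1:ℝ) else 0)
      + (if 3 * 2 ^ (L - 1) ≤ a then (1:ℝ) else 0))

lemma B_nonneg (L a : ℕ) : 0 ≤ B L a := by
  unfold B; split_ifs <;> positivity

lemma B_mono (L : ℕ) {x y : ℕ} (h : x ≤ y) : B L x ≤ B L y := by
  rcases Nat.eq_zero_or_pos x with rfl | hx
  · exact B_nonneg L y
  have hy : y ≠ 0 := by omega
  unfold B
  rw [if_neg (by omega), if_neg hy]
  apply mul_le_mul_of_nonneg_left _ (by positivity)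
  have h1 : ((min (Nat.log 2 x + 1) L : ℕ) : ℝ) ≤ ((min (Nat.log 2 y + 1) L : ℕ) : ℝ) := by
    exact_mod_cast min_le_min (by have := Nat.log_mono_right (b := 2) h; omega) le_rfl
  have h2 : (if 2 ^ L ≤ x then (1:ℝ) else 0) ≤ (if 2 ^ L ≤ y then (1:ℝ) else 0) := by
    by_cases p : 2 ^ L ≤ x
    · rw [if_pos p, if_pos (p.trans h)]
    · rw [if_neg p]; split_ifs <;> norm_num
  have h3 : (if 3 * 2 ^ (L-1) ≤ x then (1:ℝ) else 0) ≤ (if 3 * 2 ^ (L-1) ≤ y then (1:ℝ) else 0) := by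
    by_cases p : 3 * 2 ^ (L-1) ≤ x
    · rw [if_pos p, if_pos (p.trans h)]
    · rw [if_neg p]; split_ifs <;> norm_num
  linarith

lemma B_cap (L a : ℕ) : B L a ≤ (L : ℝ) * (L + 2) := by
  have hL : (0:ℝ) ≤ L := by positivity
  unfold B; split
  · positivity
  · have h1 : ((min (Nat.log 2 a + 1) L : ℕ) : ℝ) ≤ (L : ℝ) := by
      exact_mod_cast min_le_right _ _
    have h2 : (if 2 ^ L ≤ a then (1:ℝ) else 0) ≤ 1 := by split_ifs <;> norm_num
    have h3 : (if 3 * 2 ^ (L-1) ≤ a then (1:ℝ) else 0) ≤ 1 := by split_ifs <;> norm_num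
    nlinarith

lemma B_drop (L a : ℕ) (hL : 1 ≤ L) (ha : 1 ≤ a) (ha2 : a < 2 ^ (L + 1)) :
    B L (a - 2 ^ (min (Nat.log 2 a) (L - 1))) + L ≤ B L a := by
  obtain ⟨L', rfl⟩ : ∃ L', L = L' + 1 := ⟨L - 1, by omega⟩
  set L := L' + 1 with hLdef
  have hL1 : L - 1 = L' := by omega
  have hLr : (1:ℝ) ≤ (L:ℝ) := by exact_mod_cast hL
  set m := Nat.log 2 a with hm
  have hma : 2 ^ m ≤ a := Nat.pow_log_le_self 2 (by omega)
  have ham : a < 2 ^ (m + 1) := Nat.lt_pow_succ_log_self one_lt_two a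
  rcases lt_or_ge m L with hcase | hcase
  · -- m < L : t = m
    have ht : min m (L - 1) = m := min_eq_left (by omega)
    rw [ht]
    have hpow : 2 ^ (m+1) ≤ 2 ^ L := Nat.pow_le_pow_right (by norm_num) (by omega)
    have hpow2 : 2 ^ L = 2 * 2 ^ (L-1) := by rw [hL1]; ring
    have hBa : B L a = (L : ℝ) * ((m:ℝ) + 1) := by
      unfold B
      rw [if_neg (by omega), ← hm, min_eq_left (by omega), if_neg (by omega), if_neg (by omega)]
      all_goals (push_cast; try ring)
    rw [hBa]
    set b := a - 2 ^ m with hb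
    have hbm : b < 2 ^ m := by
      have : 2 ^ (m+1) = 2 * 2 ^ m := by ring
      omega
    rcases Nat.eq_zero_or_pos b with hb0 | hb0
    · rw [hb0]
      unfold B
      rw [if_pos rfl]
      have hmr : (0:ℝ) ≤ (m:ℝ) := by positivity
      nlinarith
    · have hm1 : 1 ≤ m := by
        rcases Nat.eq_zero_or_pos m with h0 | h
        · rw [h0] at hbm; omega
        · exact h
      have hlogb : Nat.log 2 b < m := Nat.log_lt_of_lt_pow (by omega) hbm
      have hBb : B L b ≤ (L:ℝ) * (m:ℝ) := by
        unfold B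
        rw [if_neg (by omega), if_neg (by omega), if_neg (by omega)]
        have : ((min (Nat.log 2 b + 1) L : ℕ) : ℝ) ≤ (m : ℝ) := by
          exact_mod_cast le_trans (min_le_left _ _) (by omega)
        nlinarith
      nlinarith
  · -- L ≤ m : t = L - 1 = L'
    have ht : min m (L - 1) = L' := by omega
    rw [ht]
    have hLa : 2 ^ L ≤ a := le_trans (Nat.pow_le_pow_right (by norm_num) hcase) hma
    have hpow2 : 2 ^ L = 2 * 2 ^ L' := by rw [hLdef]; ring
    have hpow3 : 2 ^ (L+1) = 4 * 2 ^ L' := by rw [hLdef]; ring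
    set b := a - 2 ^ L' with hb
    have hb0 : b ≠ 0 := by omega
    have hb3 : ¬ (3 * 2 ^ (L-1) ≤ b) := by rw [hL1]; omega
    have hminL : min (m + 1) L = L := min_eq_right (by omega)
    rcases le_or_gt (3 * 2 ^ (L-1)) a with hca | hca
    · -- B a = L*(L+2)
      have hBa : B L a = (L:ℝ) * ((L:ℝ) + 1 + 1) := by
        unfold B
        rw [if_neg (by omega), ← hm, hminL, if_pos hLa, if_pos hca]
        all_goals (push_cast; try ring)
      have hBb : B L b ≤ (L:ℝ) * ((L:ℝ) + 1) := by
        unfold B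
        rw [if_neg hb0, if_neg hb3]
        have h1 : ((min (Nat.log 2 b + 1) L : ℕ) : ℝ) ≤ (L : ℝ) := by
          exact_mod_cast min_le_right _ _
        have h2 : (if 2 ^ L ≤ b then (1:ℝ) else 0) ≤ 1 := by split_ifs <;> norm_num
        nlinarith
      rw [hBa]
      nlinarith
    · -- B a = L*(L+1)
      have hBa : B L a = (L:ℝ) * ((L:ℝ) + 1) := by
        unfold B
        rw [if_neg (by omega), ← hm, hminL, if_pos hLa, if_neg (by omega)]
        all_goals (push_cast; try ring)
      have hbL : ¬ (2 ^ L ≤ b) := by rw [hL1] at hca; omega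
      have hBb : B L b ≤ (L:ℝ) * (L:ℝ) := by
        unfold B
        rw [if_neg hb0, if_neg hb3, if_neg hbL]
        have h1 : ((min (Nat.log 2 b + 1) L : ℕ) : ℝ) ≤ (L : ℝ) := by
          exact_mod_cast min_le_right _ _
        nlinarith
      rw [hBa]
      nlinarith

lemma sum_mu (n : ℕ) {a : ℕ} (ha : 1 ≤ a) (g : ℕ → ℝ) :
    ∑ d ∈ Finset.Icc 1 a, muPow2 n d * g d
      = ((Nat.log 2 n : ℝ))⁻¹ *
          ∑ i ∈ Finset.range (min (Nat.log 2 a + 1) (Nat.log 2 n)), g (2 ^ i) := by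
  classical
  set L := Nat.log 2 n with hL
  set k := min (Nat.log 2 a + 1) L with hk
  have hset : (Finset.Icc 1 a).filter
        (fun d => d ∈ (Finset.range L).image (fun i => 2 ^ i))
      = (Finset.range k).image (fun i => 2 ^ i) := by
    ext d
    simp only [Finset.mem_filter, Finset.mem_Icc, Finset.mem_image, Finset.mem_range]
    constructor
    · rintro ⟨⟨h1, h2⟩, i, hiL, rfl⟩
      refine ⟨i, ?_, rfl⟩
      have : i ≤ Nat.log 2 a := (Nat.le_log_iff_pow_le one_lt_two (by omega)).2 h2
      omega
    · rintro ⟨i, hik, rfl⟩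
      have hi : i ≤ Nat.log 2 a := by omega
      have h2 : 2 ^ i ≤ a := (Nat.le_log_iff_pow_le one_lt_two (by omega)).1 hi
      exact ⟨⟨Nat.one_le_two_pow, h2⟩, i, by omega, rfl⟩
  calc ∑ d ∈ Finset.Icc 1 a, muPow2 n d * g d
      = ∑ d ∈ Finset.Icc 1 a,
          (if d ∈ (Finset.range L).image (fun i => 2 ^ i) then ((L:ℝ))⁻¹ * g d else 0) := by
        refine Finset.sum_congr rfl fun d _ => ?_
        unfold muPow2
        split_ifs <;> simp [hL]
    _ = ∑ d ∈ (Finset.Icc 1 a).filter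
          (fun d => d ∈ (Finset.range L).image (fun i => 2 ^ i)), ((L:ℝ))⁻¹ * g d :=
        (Finset.sum_filter _ _).symm
    _ = ∑ i ∈ Finset.range k, ((L:ℝ))⁻¹ * g (2 ^ i) := by
        rw [hset, Finset.sum_image]
        intro i _ j _ h
        exact Nat.pow_right_injective le_rfl h
    _ = ((L:ℝ))⁻¹ * ∑ i ∈ Finset.range k, g (2 ^ i) := by rw [Finset.mul_sum]

end Stmt6Aux

/-- For `μ = μ_pow2`, the token process started uniformly on `[1,n]` satisfies
`E(T) = O((log n)²)`. `T` is characterized by `T 0 = 0` and the hitting-time recurrence. -/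
theorem stmt6 : ∃ C > 0, ∀ n : ℕ, 2 ≤ n → ∀ T : ℕ → ℝ, T 0 = 0 →
    (∀ a ∈ Finset.Icc 1 n,
      (∑ d ∈ Finset.Icc 1 a, muPow2 n d) * T a =
        1 + ∑ d ∈ Finset.Icc 1 a, muPow2 n d * T (a - d)) →
    (1 / (n : ℝ)) * ∑ a ∈ Finset.Icc 1 n, T a ≤ C * Real.log n ^ 2 := by
  have hlog2 : (0:ℝ) < Real.log 2 := Real.log_pos one_lt_two
  refine ⟨3 / Real.log 2 ^ 2, by positivity, ?_⟩
  intro n hn T hT0 hrec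
  set L := Nat.log 2 n with hL
  have hL1 : 1 ≤ L := Nat.log_pos one_lt_two hn
  have hLr : (1:ℝ) ≤ (L:ℝ) := by exact_mod_cast hL1
  have hLr0 : (0:ℝ) < (L:ℝ) := by linarith
  have hnpow : n < 2 ^ (L + 1) := Nat.lt_pow_succ_log_self one_lt_two n
  -- key induction: T a ≤ B L a for all a ≤ n
  have key : ∀ a, a ≤ n → T a ≤ Stmt6Aux.B L a := by
    intro a
    induction a using Nat.strong_induction_on with
    | _ a ih =>
      intro han
      rcases Nat.eq_zero_or_pos a with rfl | ha
      · rw [hT0]; simp [Stmt6Aux.B]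
      · set k := min (Nat.log 2 a + 1) L with hk
        have hk1 : 1 ≤ k := by omega
        have hrecA := hrec a (Finset.mem_Icc.2 ⟨ha, han⟩)
        have hsum1 : ∑ d ∈ Finset.Icc 1 a, muPow2 n d = ((L:ℝ))⁻¹ * (k:ℝ) := by
          have : ∑ d ∈ Finset.Icc 1 a, muPow2 n d
              = ∑ d ∈ Finset.Icc 1 a, muPow2 n d * (fun _ => (1:ℝ)) d := by simp
          rw [this, Stmt6Aux.sum_mu n ha]
          rw [Finset.sum_const, Finset.card_range, nsmul_eq_mul, mul_one]
        rw [hsum1, Stmt6Aux.sum_mu n ha (fun d => T (a - d))] at hrecA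
        have hkT : (k:ℝ) * T a = (L:ℝ) + ∑ i ∈ Finset.range k, T (a - 2 ^ i) := by
          have hLne : ((L:ℝ)) ≠ 0 := ne_of_gt hLr0
          field_simp at hrecA
          simp only [← hL, ← hk] at hrecA
          rw [hrecA, mul_add, mul_one, mul_div_cancel₀ _ hLne]
        obtain ⟨j, hj⟩ : ∃ j, k = j + 1 := ⟨k - 1, by omega⟩
        have hjm : j = min (Nat.log 2 a) (L - 1) := by omega
        have hterm : ∀ i, T (a - 2 ^ i) ≤ Stmt6Aux.B L (a - 2 ^ i) := by
          intro i
          exact ih (a - 2 ^ i) (Nat.sub_lt ha (Nat.two_pow_pos i))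
            (le_trans (Nat.sub_le _ _) han)
        have hsum_le : ∑ i ∈ Finset.range (j + 1), T (a - 2 ^ i)
            ≤ (j:ℝ) * Stmt6Aux.B L a + (Stmt6Aux.B L a - (L:ℝ)) := by
          rw [Finset.sum_range_succ]
          have part1 : ∑ i ∈ Finset.range j, T (a - 2 ^ i) ≤ (j:ℝ) * Stmt6Aux.B L a := by
            calc ∑ i ∈ Finset.range j, T (a - 2 ^ i)
                ≤ ∑ i ∈ Finset.range j, Stmt6Aux.B L a := by
                  refine Finset.sum_le_sum fun i _ => ?_
                  exact (hterm i).trans (Stmt6Aux.B_mono L (Nat.sub_le _ _))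
              _ = (j:ℝ) * Stmt6Aux.B L a := by
                  rw [Finset.sum_const, Finset.card_range]; simp [nsmul_eq_mul]
          have part2 : T (a - 2 ^ j) ≤ Stmt6Aux.B L a - (L:ℝ) := by
            have := Stmt6Aux.B_drop L a hL1 ha (lt_of_le_of_lt han hnpow)
            rw [← hjm] at this
            linarith [hterm j]
          linarith
        have hfin : (k:ℝ) * T a ≤ (k:ℝ) * Stmt6Aux.B L a := by
          rw [hkT, hj]
          push_cast
          linarith [hsum_le]
        have hkpos : (0:ℝ) < (k:ℝ) := by exact_mod_cast hk1
        exact le_of_mul_le_mul_left hfin hkpos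
  -- conclude
  have hsumT : ∑ a ∈ Finset.Icc 1 n, T a ≤ (n:ℝ) * ((L:ℝ) * ((L:ℝ) + 2)) := by
    calc ∑ a ∈ Finset.Icc 1 n, T a
        ≤ ∑ a ∈ Finset.Icc 1 n, ((L:ℝ) * ((L:ℝ) + 2)) := by
          refine Finset.sum_le_sum fun a haa => ?_
          have := Finset.mem_Icc.1 haa
          exact (key a this.2).trans (Stmt6Aux.B_cap L a)
      _ = (n:ℝ) * ((L:ℝ) * ((L:ℝ) + 2)) := by
          rw [Finset.sum_const, Nat.card_Icc]
          simp [nsmul_eq_mul]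
  have hnpos : (0:ℝ) < (n:ℝ) := by positivity
  have hlogn : (L:ℝ) * Real.log 2 ≤ Real.log n := by
    have h2L : (2:ℕ) ^ L ≤ n := Nat.pow_log_le_self 2 (by omega)
    have h2Lr : ((2:ℝ)) ^ L ≤ (n:ℝ) := by exact_mod_cast h2L
    have h3 := Real.log_le_log (by positivity : (0:ℝ) < (2:ℝ) ^ L) h2Lr
    rwa [Real.log_pow] at h3
  have hLle : (L:ℝ) ≤ Real.log n / Real.log 2 := by
    rw [le_div_iff₀ hlog2]; linarith
  calc (1 / (n:ℝ)) * ∑ a ∈ Finset.Icc 1 n, T a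
      ≤ (1 / (n:ℝ)) * ((n:ℝ) * ((L:ℝ) * ((L:ℝ) + 2))) := by
        apply mul_le_mul_of_nonneg_left hsumT (by positivity)
    _ = (L:ℝ) * ((L:ℝ) + 2) := by field_simp
    _ ≤ 3 * (L:ℝ) ^ 2 := by nlinarith
    _ ≤ 3 * (Real.log n / Real.log 2) ^ 2 := by nlinarith [hLle, hLr, sq_nonneg (Real.log ↑n / Real.log 2 - (L:ℝ))]
    _ = 3 / Real.log 2 ^ 2 * Real.log n ^ 2 := by
        all_goals (field_simp; try ring)
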